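/- Let $0 < \kappa < 1$, $\eta > 0$, and $\xi \geq 0$. Then $\left|\int_0^{\eta\cosh\xi} \sin(q - \tfrac{\pi\kappa}{2})\, q^{\kappa-1}\, dq\right| \leq C_\kappa\, (\eta\cosh\xi)^{\kappa - 1}$ for a constant $C_\kappa$ depending only on $\kappa$. -/

import Mathlib

open MeasureTheory Real Set intervalIntegral
set_option maxHeartbeats 1000000

section Aux



lemma img_div : (fun x : ℝ => x / (1 - x)) '' Ioo 0 1 = Ioi 0 := by
  ext y
  constructor
  · rintro ⟨x, ⟨hx0, hx1⟩, rfl⟩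
    exact div_pos hx0 (by linarith)
  · intro hy
    have hy' := mem_Ioi.mp hy
    refine ⟨y / (1 + y), ⟨div_pos hy' (by linarith), by
      rw [div_lt_one (by linarith)]; linarith⟩, ?_⟩
    show y / (1 + y) / (1 - y / (1 + y)) = y
    have h1 : (1:ℝ) - y / (1 + y) = 1 / (1 + y) := by field_simp; ring
    rw [h1]
    field_simp

lemma int_one_add_eq_beta (b : ℝ) (hb : 0 < b) (hb1 : b < 1) :
    ∫ u in Ioi (0:ℝ), u ^ (b-1) / (1 + u) = ∫ x in Ioo (0:ℝ) 1, x ^ (b-1) * (1-x) ^ (-b) := by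
  rw [← img_div]
  rw [integral_image_eq_integral_abs_deriv_smul measurableSet_Ioo
    (f' := fun x => 1 / (1-x)^2) ?deriv ?inj]
  case deriv =>
    intro x hx
    have h1 : (1:ℝ) - x ≠ 0 := by have := hx.2; intro h; linarith [show (1:ℝ) - x = 0 from h]
    have h := ((hasDerivAt_id x).div ((hasDerivAt_const x 1).sub (hasDerivAt_id x)) h1)
    simp only [id_eq] at h
    have h2 : (1 * (1 - x) - x * (0 - 1)) / (1 - x) ^ 2 = 1 / (1-x)^2 := by
      field_simp; ring
    have h : HasDerivAt (fun x : ℝ => x / (1 - x)) ((1 * (1 - x) - x * (0 - 1)) / (1 - x) ^ 2) x := h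
    rw [h2] at h
    exact h.hasDerivWithinAt
  case inj =>
    intro x hx y hy h
    have hx1 : (1:ℝ) - x > 0 := by linarith [hx.2]
    have hy1 : (1:ℝ) - y > 0 := by linarith [hy.2]
    simp only at h
    field_simp at h
    nlinarith
  refine setIntegral_congr_fun measurableSet_Ioo (fun x hx => ?_)
  have hx0 := hx.1
  have hx1 : (1:ℝ) - x > 0 := by linarith [hx.2]
  have hfx : x / (1 - x) > 0 := div_pos hx0 hx1
  have h1 : (1:ℝ) + x / (1-x) = 1/(1-x) := by field_simp; ring
  rw [smul_eq_mul, abs_of_pos (by positivity), h1, Real.div_rpow hx0.le hx1.le]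
  have e2 : ((1:ℝ)-x)^(2:ℕ) = (1-x)^((2:ℝ)) := by
    rw [← Real.rpow_natCast]; norm_num
  rw [e2, div_div_eq_mul_div, div_one, one_div, ← Real.rpow_neg hx1.le, div_eq_mul_inv,
    ← Real.rpow_neg hx1.le]
  calc (1-x)^(-2:ℝ) * (x^(b-1) * (1-x)^(-(b-1)) * (1-x))
      = x^(b-1) * ((1-x)^(-2:ℝ) * (1-x)^(-(b-1)) * (1-x)^(1:ℝ)) := by
        rw [Real.rpow_one]; ring
    _ = x^(b-1) * (1-x)^(-2 + -(b-1) + 1) := by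
        rw [Real.rpow_add hx1, Real.rpow_add hx1]
    _ = x^(b-1) * (1-x)^(-b) := by rw [show (-2 + -(b-1) + 1 : ℝ) = -b by ring]


lemma beta_real (b : ℝ) (hb : 0 < b) (hb1 : b < 1) :
    ∫ x in Ioo (0:ℝ) 1, x ^ (b-1) * (1-x) ^ (-b) = Real.Gamma b * Real.Gamma (1-b) := by
  have h1 : Complex.Gamma b * Complex.Gamma (1-b) = Complex.betaIntegral b (1-b) := by
    have := Complex.Gamma_mul_Gamma_eq_betaIntegral (s := (b:ℂ)) (t := (1:ℂ)-b)
      (by simpa using hb) (by simp [Complex.sub_re]; linarith)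
    simpa [Complex.Gamma_one] using this
  have h2 : Complex.betaIntegral b (1-b)
      = ((∫ x in (0:ℝ)..1, x ^ (b-1) * (1-x) ^ (-b) : ℝ) : ℂ) := by
    rw [Complex.betaIntegral, ← intervalIntegral.integral_ofReal]
    refine intervalIntegral.integral_congr (fun x hx => ?_)
    rw [uIcc_of_le (by norm_num)] at hx
    have hx0 : (0:ℝ) ≤ x := hx.1
    have hx1 : (0:ℝ) ≤ 1 - x := by linarith [hx.2]
    rw [show ((b:ℂ)-1) = ((b-1:ℝ):ℂ) by push_cast; ring,
      show ((1:ℂ)-(b:ℂ)-1) = ((-b:ℝ):ℂ) by push_cast; ring,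
      show ((1:ℂ)-(x:ℂ)) = ((1-x:ℝ):ℂ) by push_cast; ring,
      ← Complex.ofReal_cpow hx0, ← Complex.ofReal_cpow hx1, ← Complex.ofReal_mul]
  have h3 : (∫ x in (0:ℝ)..1, x ^ (b-1) * (1-x) ^ (-b) : ℝ)
      = ∫ x in Ioo (0:ℝ) 1, x ^ (b-1) * (1-x) ^ (-b) := by
    rw [intervalIntegral.integral_of_le (by norm_num), integral_Ioc_eq_integral_Ioo]
  rw [← h3]
  have := h1.trans h2
  rw [Complex.Gamma_ofReal, show ((1:ℂ) - b) = ((1-b : ℝ) : ℂ) by push_cast; ring,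
    Complex.Gamma_ofReal, ← Complex.ofReal_mul] at this
  exact_mod_cast this.symm


lemma sq_img : (fun t : ℝ => t^2) '' Ioi 0 = Ioi 0 := by
  ext y
  constructor
  · rintro ⟨t, ht, rfl⟩; exact pow_pos (mem_Ioi.mp ht) 2
  · intro hy
    exact ⟨Real.sqrt y, Real.sqrt_pos.mpr hy, by show Real.sqrt y ^ 2 = y; rw [sq_sqrt (le_of_lt hy)]⟩

lemma int_sq_sub (a : ℝ) :
    ∫ u in Ioi (0:ℝ), u ^ (a/2-1) / (1 + u)
      = ∫ t in Ioi (0:ℝ), 2 * (t ^ (a-1) / (1 + t^2)) := by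
  nth_rewrite 1 [← sq_img]
  rw [integral_image_eq_integral_abs_deriv_smul measurableSet_Ioi
    (f' := fun t => 2*t) (fun t _ => ((hasDerivAt_pow 2 t).congr_deriv (by ring)).hasDerivWithinAt)
    (fun x hx y hy h => by
      nlinarith [mem_Ioi.mp hx, mem_Ioi.mp hy])]
  refine setIntegral_congr_fun measurableSet_Ioi (fun t ht => ?_)
  have ht0 := mem_Ioi.mp ht
  rw [smul_eq_mul, abs_of_pos (by positivity)]
  have h1 : (t^2 : ℝ) ^ (a/2-1) = t ^ (a-2) := by
    rw [← Real.rpow_natCast t 2, ← Real.rpow_mul ht0.le]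
    rw [show ((2:ℕ):ℝ) * (a/2-1) = a - 2 by push_cast; ring]
  rw [h1]
  have h2 : t ^ (a-2) * t = t ^ (a-1) := by
    nth_rewrite 2 [← Real.rpow_one t]
    rw [← Real.rpow_add ht0, show a - 2 + 1 = a - 1 by ring]
  field_simp
  rw [mul_comm t (t ^ (a-2)), h2]


-- measurability helper
lemma meas_rpow (c : ℝ) : Measurable (fun t : ℝ => t ^ c) :=
  by fun_prop

lemma integrableOn_rpow_div (a : ℝ) (ha : 0 < a) (ha2 : a < 2) :
    IntegrableOn (fun t : ℝ => t ^ (a-1) / (1 + t^2)) (Ioi 0) := by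
  have hmeas : Measurable (fun t : ℝ => t ^ (a-1) / (1 + t^2)) :=
    (meas_rpow (a-1)).div ((measurable_const.add ((measurable_id.pow_const 2))))
  have h01 : IntegrableOn (fun t : ℝ => t ^ (a-1) / (1 + t^2)) (Ioc 0 1) := by
    have hbase : IntegrableOn (fun t : ℝ => t ^ (a-1)) (Ioc 0 1) := by
      have := intervalIntegral.intervalIntegrable_rpow' (a := 0) (b := 1)
        (r := a-1) (by linarith)
      rwa [intervalIntegrable_iff_integrableOn_Ioc_of_le (by norm_num)] at this
    refine hbase.mono' hmeas.aestronglyMeasurable ?_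
    filter_upwards [ae_restrict_mem measurableSet_Ioc] with t ht
    have ht0 := ht.1
    rw [Real.norm_eq_abs, abs_div, abs_of_nonneg (Real.rpow_nonneg ht0.le _),
      abs_of_pos (by positivity)]
    rw [div_le_iff₀ (by positivity)]
    nlinarith [Real.rpow_nonneg ht0.le (a-1)]
  have h1i : IntegrableOn (fun t : ℝ => t ^ (a-1) / (1 + t^2)) (Ioi 1) := by
    have hbase : IntegrableOn (fun t : ℝ => t ^ (a-3)) (Ioi 1) :=
      integrableOn_Ioi_rpow_of_lt (by linarith) one_pos
    refine hbase.mono' hmeas.aestronglyMeasurable ?_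
    filter_upwards [ae_restrict_mem measurableSet_Ioi] with t ht
    have ht1 : (1:ℝ) ≤ t := le_of_lt (mem_Ioi.mp ht)
    have ht0 : (0:ℝ) < t := lt_of_lt_of_le one_pos ht1
    rw [Real.norm_eq_abs, abs_div, abs_of_nonneg (Real.rpow_nonneg ht0.le _),
      abs_of_pos (by positivity)]
    rw [div_le_iff₀ (by positivity), show a - 3 = (a-1) + (-2) by ring,
      Real.rpow_add ht0, mul_assoc]
    nth_rewrite 1 [← mul_one (t ^ (a-1))]
    refine mul_le_mul_of_nonneg_left ?_ (Real.rpow_nonneg ht0.le _)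
    rw [Real.rpow_neg ht0.le, show (2:ℝ) = ((2:ℕ):ℝ) by norm_num, Real.rpow_natCast,
      inv_mul_eq_div, le_div_iff₀ (by positivity)]
    nlinarith
  have := h01.union h1i
  rwa [Ioc_union_Ioi_eq_Ioi (by norm_num : (0:ℝ) ≤ 1)] at this

lemma f_val (a : ℝ) (ha : 0 < a) (ha2 : a < 2) :
    ∫ t in Ioi (0:ℝ), t ^ (a-1) / (1 + t^2) = π/2 / Real.sin (π * a / 2) := by
  have hb : 0 < a/2 := by linarith
  have hb1 : a/2 < 1 := by linarith
  have h1 := int_one_add_eq_beta (a/2) hb hb1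
  have h2 := beta_real (a/2) hb hb1
  have h3 := int_sq_sub a
  rw [MeasureTheory.integral_const_mul] at h3
  have h4 := Real.Gamma_mul_Gamma_one_sub (a/2)
  have hs : Real.sin (π * (a/2)) = Real.sin (π * a / 2) := by ring_nf
  have : 2 * ∫ t in Ioi (0:ℝ), t ^ (a-1) / (1 + t^2) = π / Real.sin (π * a / 2) := by
    rw [← h3, h1, h2, h4, hs]
  have hspos : 0 < Real.sin (π * a / 2) := by
    apply Real.sin_pos_of_pos_of_lt_pi <;> nlinarith [Real.pi_pos]
  rw [div_div, eq_div_iff (by positivity)]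
  have h5 : (2 * ∫ t in Ioi (0:ℝ), t ^ (a-1) / (1 + t^2)) * Real.sin (π * a / 2) = π := by
    rw [this]; field_simp
  linear_combination h5

lemma J_zero (κ : ℝ) (h0 : 0 < κ) (h1 : κ < 1) :
    ∫ t in Ioi (0:ℝ),
      t ^ (-κ) * (Real.cos (π*κ/2) - t * Real.sin (π*κ/2)) / (1+t^2) = 0 := by
  set c := π*κ/2 with hc
  have hint1 : IntegrableOn (fun t : ℝ => t ^ ((1-κ)-1) / (1 + t^2)) (Ioi 0) :=
    integrableOn_rpow_div (1-κ) (by linarith) (by linarith)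
  have hint2 : IntegrableOn (fun t : ℝ => t ^ ((2-κ)-1) / (1 + t^2)) (Ioi 0) :=
    integrableOn_rpow_div (2-κ) (by linarith) (by linarith)
  have key : ∀ t ∈ Ioi (0:ℝ),
      t ^ (-κ) * (Real.cos c - t * Real.sin c) / (1+t^2)
      = Real.cos c * (t ^ ((1-κ)-1) / (1 + t^2))
        - Real.sin c * (t ^ ((2-κ)-1) / (1 + t^2)) := by
    intro t ht
    have ht0 := mem_Ioi.mp ht
    have e1 : ((1:ℝ)-κ)-1 = -κ := by ring
    have e2 : t ^ ((2-κ)-1) = t ^ (-κ) * t := by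
      rw [show (2:ℝ)-κ-1 = -κ + 1 by ring, Real.rpow_add ht0, Real.rpow_one]
    rw [e1, e2]
    ring
  rw [setIntegral_congr_fun measurableSet_Ioi key, integral_sub
    (hint1.const_mul _) (hint2.const_mul _), MeasureTheory.integral_const_mul, MeasureTheory.integral_const_mul,
    f_val (1-κ) (by linarith) (by linarith), f_val (2-κ) (by linarith) (by linarith)]
  have e3 : Real.sin (π * (1-κ) / 2) = Real.cos c := by
    rw [show π * (1-κ)/2 = π/2 - π*κ/2 by ring, Real.sin_pi_div_two_sub]
  have e4 : Real.sin (π * (2-κ) / 2) = Real.sin c := by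
    rw [show π * (2-κ)/2 = π - π*κ/2 by ring, Real.sin_pi_sub]
  rw [e3, e4]
  have hcpos : 0 < Real.cos c := by
    apply Real.cos_pos_of_mem_Ioo
    constructor
    · have := Real.pi_pos; rw [hc]; nlinarith
    · rw [hc]; nlinarith [Real.pi_pos]
  have hspos : 0 < Real.sin c := by
    apply Real.sin_pos_of_pos_of_lt_pi
    · rw [hc]; nlinarith [Real.pi_pos]
    · rw [hc]; nlinarith [Real.pi_pos]
  field_simp
  ring



lemma inner_ftc (c t T : ℝ) (ht : 0 < t) (hT : 0 < T) :
    ∫ q in Ioc (0:ℝ) T, Real.sin (q - c) * Real.exp (-(t*q))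
      = (Real.cos c - t * Real.sin c)/(1+t^2)
        - Real.exp (-(t*T))*(t*Real.sin (T-c)+Real.cos (T-c))/(1+t^2) := by
  have ht2 : (1:ℝ) + t^2 ≠ 0 := by positivity
  have hderiv : ∀ q ∈ uIcc (0:ℝ) T,
      HasDerivAt (fun q => -(Real.exp (-(t*q)) * (t*Real.sin (q-c)+Real.cos (q-c)))/(1+t^2))
        (Real.sin (q - c) * Real.exp (-(t*q))) q := by
    intro q _
    have h1 : HasDerivAt (fun q : ℝ => -(t*q)) (-t) q := by
      have h : HasDerivAt (fun y : ℝ => -(t * y)) (-(t*1)) q := ((hasDerivAt_id q).const_mul t).neg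
      simpa using h
    have h2 := h1.exp
    have h3 : HasDerivAt (fun q : ℝ => t*Real.sin (q-c)+Real.cos (q-c))
        (t*Real.cos (q-c) - Real.sin (q-c)) q := by
      have hs := ((hasDerivAt_id q).sub_const c).sin
      have hc := ((hasDerivAt_id q).sub_const c).cos
      have h : HasDerivAt (fun y : ℝ => t * Real.sin (y - c) + Real.cos (y - c)) _ q := (hs.const_mul t).add hc
      simpa [sub_eq_add_neg] using h
    have h4 := ((h2.mul h3).neg).div_const (1+t^2)
    refine h4.congr_deriv ?_
    field_simp
    ring
  rw [← intervalIntegral.integral_of_le hT.le,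
    intervalIntegral.integral_eq_sub_of_hasDerivAt hderiv ?cont]
  case cont =>
    apply Continuous.intervalIntegrable
    fun_prop
  rw [zero_sub, Real.sin_neg, Real.cos_neg, mul_zero, neg_zero, Real.exp_zero]
  ring



lemma integrableOn_rpow_exp (κ r : ℝ) (h0 : 0 < κ) (h1 : κ < 1) (hr : 0 < r) :
    IntegrableOn (fun t : ℝ => t ^ (-κ) * Real.exp (-(r*t))) (Ioi 0) := by
  have hmeas : Measurable (fun t : ℝ => t ^ (-κ) * Real.exp (-(r*t))) := by fun_prop
  have h01 : IntegrableOn (fun t : ℝ => t ^ (-κ) * Real.exp (-(r*t))) (Ioc 0 1) := by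
    have hbase : IntegrableOn (fun t : ℝ => t ^ (-κ)) (Ioc 0 1) := by
      have := intervalIntegral.intervalIntegrable_rpow' (a := 0) (b := 1)
        (r := -κ) (by linarith)
      rwa [intervalIntegrable_iff_integrableOn_Ioc_of_le (by norm_num)] at this
    refine hbase.mono' hmeas.aestronglyMeasurable ?_
    filter_upwards [ae_restrict_mem measurableSet_Ioc] with t htm
    have ht0 := htm.1
    rw [Real.norm_eq_abs, abs_mul, abs_of_nonneg (Real.rpow_nonneg ht0.le _),
      abs_of_pos (Real.exp_pos _)]
    nth_rewrite 2 [← mul_one (t ^ (-κ))]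
    exact mul_le_mul_of_nonneg_left (Real.exp_le_one_iff.mpr (by nlinarith)) 
      (Real.rpow_nonneg ht0.le _)
  have h1i : IntegrableOn (fun t : ℝ => t ^ (-κ) * Real.exp (-(r*t))) (Ioi 1) := by
    have hbase : IntegrableOn (fun t : ℝ => Real.exp (-(r*t))) (Ioi 1) := by
      simpa [neg_mul] using exp_neg_integrableOn_Ioi (a := 1) (b := r) hr
    refine hbase.mono' hmeas.aestronglyMeasurable ?_
    filter_upwards [ae_restrict_mem measurableSet_Ioi] with t htm
    have ht1 : (1:ℝ) ≤ t := le_of_lt (mem_Ioi.mp htm)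
    have ht0 : (0:ℝ) < t := lt_of_lt_of_le one_pos ht1
    rw [Real.norm_eq_abs, abs_mul, abs_of_nonneg (Real.rpow_nonneg ht0.le _),
      abs_of_pos (Real.exp_pos _)]
    nth_rewrite 2 [← one_mul (Real.exp _)]
    exact mul_le_mul_of_nonneg_right
      (Real.rpow_le_one_of_one_le_of_nonpos ht1 (by linarith)) (Real.exp_pos _).le
  have := h01.union h1i
  rwa [Ioc_union_Ioi_eq_Ioi (by norm_num : (0:ℝ) ≤ 1)] at this

-- Laplace representation of q^(κ-1)
lemma laplace_rep (κ q : ℝ) (h0 : 0 < κ) (h1 : κ < 1) (hq : 0 < q) :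
    ∫ t in Ioi (0:ℝ), t ^ (-κ) * Real.exp (-(q*t)) = Real.Gamma (1-κ) * q ^ (κ-1) := by
  have := integral_rpow_mul_exp_neg_mul_Ioi (a := 1-κ) (r := q) (by linarith) hq
  rw [show (1:ℝ)-κ-1 = -κ by ring] at this
  rw [this, one_div, ← Real.rpow_neg_one q, ← Real.rpow_mul hq.le,
    show (-1) * (1-κ) = κ - 1 by ring, mul_comm]



lemma fubini_rep (κ c T : ℝ) (h0 : 0 < κ) (h1 : κ < 1) (hT : 0 < T) :
    Real.Gamma (1-κ) * ∫ q in Ioc (0:ℝ) T, Real.sin (q-c) * q ^ (κ-1)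
    = ∫ t in Ioi (0:ℝ), t ^ (-κ) * ∫ q in Ioc (0:ℝ) T, Real.sin (q-c) * Real.exp (-(t*q)) := by
  have hmeas : Measurable (fun p : ℝ × ℝ =>
      Real.sin (p.1 - c) * (p.2 ^ (-κ) * Real.exp (-(p.1 * p.2)))) := by fun_prop
  have hm : AEStronglyMeasurable (Function.uncurry fun q t =>
      Real.sin (q - c) * (t ^ (-κ) * Real.exp (-(q * t)))) ((volume.restrict (Ioc (0:ℝ) T)).prod (volume.restrict (Ioi (0:ℝ)))) :=
    hmeas.aestronglyMeasurable
  have hInt : Integrable (Function.uncurry fun q t =>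
      Real.sin (q - c) * (t ^ (-κ) * Real.exp (-(q * t)))) ((volume.restrict (Ioc (0:ℝ) T)).prod (volume.restrict (Ioi (0:ℝ)))) := by
    rw [integrable_prod_iff hm]
    constructor
    · filter_upwards [ae_restrict_mem measurableSet_Ioc] with q hq
      have := (integrableOn_rpow_exp κ q h0 h1 hq.1).const_mul (Real.sin (q - c))
      exact this
    · have hbound : ∀ᵐ q ∂(volume.restrict (Ioc (0:ℝ) T)),
          ‖∫ t, ‖Real.sin (q - c) * (t ^ (-κ) * Real.exp (-(q * t)))‖ ∂(volume.restrict (Ioi (0:ℝ)))‖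
            ≤ Real.Gamma (1-κ) * q ^ (κ-1) := by
        filter_upwards [ae_restrict_mem measurableSet_Ioc] with q hq
        have hq0 := hq.1
        have hle : ∫ t, ‖Real.sin (q - c) * (t ^ (-κ) * Real.exp (-(q * t)))‖ ∂(volume.restrict (Ioi (0:ℝ)))
            ≤ ∫ t, t ^ (-κ) * Real.exp (-(q * t)) ∂(volume.restrict (Ioi (0:ℝ))) := by
          refine integral_mono_of_nonneg (Filter.Eventually.of_forall fun t => norm_nonneg _)
            (integrableOn_rpow_exp κ q h0 h1 hq0) ?_
          filter_upwards [ae_restrict_mem measurableSet_Ioi] with t htm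
          have ht0 := mem_Ioi.mp htm
          rw [norm_mul, Real.norm_eq_abs, Real.norm_eq_abs, abs_mul,
            abs_of_nonneg (Real.rpow_nonneg ht0.le _), abs_of_pos (Real.exp_pos _)]
          nth_rewrite 2 [← one_mul (t ^ (-κ) * _)]
          exact mul_le_mul_of_nonneg_right (abs_le.mpr ⟨Real.neg_one_le_sin _, Real.sin_le_one _⟩) (by positivity)
        rw [Real.norm_eq_abs, abs_of_nonneg (integral_nonneg fun t => norm_nonneg _)]
        calc _ ≤ ∫ t, t ^ (-κ) * Real.exp (-(q * t)) ∂(volume.restrict (Ioi (0:ℝ))) := hle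
          _ = Real.Gamma (1-κ) * q ^ (κ-1) := laplace_rep κ q h0 h1 hq0
      have hgint : Integrable (fun q => Real.Gamma (1-κ) * q ^ (κ-1)) (volume.restrict (Ioc (0:ℝ) T)) := by
        refine Integrable.const_mul ?_ _
        have := intervalIntegral.intervalIntegrable_rpow' (a := 0) (b := T)
          (r := κ-1) (by linarith)
        rwa [intervalIntegrable_iff_integrableOn_Ioc_of_le hT.le] at this
      exact Integrable.mono' hgint (hm.norm.integral_prod_right') hbound
  calc Real.Gamma (1-κ) * ∫ q in Ioc (0:ℝ) T, Real.sin (q-c) * q ^ (κ-1)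
      = ∫ q in Ioc (0:ℝ) T, Real.sin (q-c) * (Real.Gamma (1-κ) * q ^ (κ-1)) := by
        rw [← MeasureTheory.integral_const_mul]
        exact integral_congr_ae (Filter.Eventually.of_forall fun q => by ring)
    _ = ∫ q in Ioc (0:ℝ) T, ∫ t in Ioi (0:ℝ),
          Real.sin (q-c) * (t ^ (-κ) * Real.exp (-(q*t))) := by
        refine setIntegral_congr_fun measurableSet_Ioc fun q hq => ?_
        rw [MeasureTheory.integral_const_mul, laplace_rep κ q h0 h1 hq.1]
    _ = ∫ t in Ioi (0:ℝ), ∫ q in Ioc (0:ℝ) T,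
          Real.sin (q-c) * (t ^ (-κ) * Real.exp (-(q*t))) :=
        integral_integral_swap hInt
    _ = ∫ t in Ioi (0:ℝ), t ^ (-κ) * ∫ q in Ioc (0:ℝ) T,
          Real.sin (q-c) * Real.exp (-(t*q)) := by
        refine setIntegral_congr_fun measurableSet_Ioi fun t ht => ?_
        rw [← MeasureTheory.integral_const_mul]
        refine setIntegral_congr_fun measurableSet_Ioc fun q hq => ?_
        rw [mul_comm q t]
        ring



lemma main_T (κ T : ℝ) (h0 : 0 < κ) (h1 : κ < 1) (hT : 0 < T) :
    |∫ q in Ioc (0:ℝ) T, Real.sin (q - π*κ/2) * q ^ (κ-1)| ≤ 2 * T ^ (κ-1) := by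
  set c := π*κ/2 with hc
  have hG : 0 < Real.Gamma (1-κ) := Real.Gamma_pos_of_pos (by linarith)
  -- integrability of the two pieces
  have intM : IntegrableOn
      (fun t : ℝ => t ^ (-κ) * (Real.cos c - t * Real.sin c) / (1+t^2)) (Ioi 0) := by
    have hint1 := (integrableOn_rpow_div (1-κ) (by linarith) (by linarith)).const_mul
      (Real.cos c)
    have hint2 := (integrableOn_rpow_div (2-κ) (by linarith) (by linarith)).const_mul
      (Real.sin c)
    refine MeasureTheory.IntegrableOn.congr_fun (hint1.sub hint2)
      (fun t ht => ?_) measurableSet_Ioi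
    have ht0 := mem_Ioi.mp ht
    have e1 : ((1:ℝ)-κ)-1 = -κ := by ring
    have e2 : t ^ ((2-κ)-1) = t ^ (-κ) * t := by
      rw [show (2:ℝ)-κ-1 = -κ + 1 by ring, Real.rpow_add ht0, Real.rpow_one]
    simp only [Pi.sub_apply]
    rw [e1, e2]
    ring
  have intE : IntegrableOn
      (fun t : ℝ => t ^ (-κ) *
        (Real.exp (-(t*T))*(t*Real.sin (T-c)+Real.cos (T-c))/(1+t^2))) (Ioi 0) := by
    have hbase := (integrableOn_rpow_exp κ T h0 h1 hT).const_mul 2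
    refine hbase.mono' (Measurable.aestronglyMeasurable (by fun_prop)) ?_
    filter_upwards [ae_restrict_mem measurableSet_Ioi] with t htm
    have ht0 := mem_Ioi.mp htm
    have habs : |t*Real.sin (T-c)+Real.cos (T-c)| ≤ t + 1 := by
      calc |t*Real.sin (T-c)+Real.cos (T-c)|
          ≤ |t*Real.sin (T-c)| + |Real.cos (T-c)| := abs_add_le _ _
        _ ≤ t * 1 + 1 := by
            refine add_le_add ?_ (abs_cos_le_one _)
            rw [abs_mul, abs_of_pos ht0]
            exact mul_le_mul_of_nonneg_left
              (abs_le.mpr ⟨Real.neg_one_le_sin _, Real.sin_le_one _⟩) ht0.le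
        _ = t + 1 := by ring
    rw [Real.norm_eq_abs, abs_mul, abs_of_nonneg (Real.rpow_nonneg ht0.le _),
      abs_div, abs_of_pos (show (0:ℝ) < 1 + t^2 by positivity), abs_mul,
      abs_of_pos (Real.exp_pos _)]
    have hb2 : |t*Real.sin (T-c)+Real.cos (T-c)| / (1+t^2) ≤ 2 := by
      rw [div_le_iff₀ (by positivity)]
      nlinarith
    calc t ^ (-κ) * (Real.exp (-(t*T)) * |t*Real.sin (T-c)+Real.cos (T-c)| / (1+t^2))
        = t ^ (-κ) * Real.exp (-(t*T)) * (|t*Real.sin (T-c)+Real.cos (T-c)| / (1+t^2)) := by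
          ring
      _ ≤ t ^ (-κ) * Real.exp (-(t*T)) * 2 := by
          refine mul_le_mul_of_nonneg_left hb2 (by positivity)
      _ = 2 * (t ^ (-κ) * Real.exp (-(T*t))) := by rw [mul_comm t T]; ring
  -- the Fubini identity with FTC substituted
  have key : Real.Gamma (1-κ) * ∫ q in Ioc (0:ℝ) T, Real.sin (q - c) * q ^ (κ-1)
      = - ∫ t in Ioi (0:ℝ), t ^ (-κ) *
          (Real.exp (-(t*T))*(t*Real.sin (T-c)+Real.cos (T-c))/(1+t^2)) := by
    rw [fubini_rep κ c T h0 h1 hT]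
    have step : ∫ t in Ioi (0:ℝ), t ^ (-κ) *
          ∫ q in Ioc (0:ℝ) T, Real.sin (q-c) * Real.exp (-(t*q))
        = ∫ t in Ioi (0:ℝ),
            (t ^ (-κ) * (Real.cos c - t * Real.sin c) / (1+t^2)
             - t ^ (-κ) * (Real.exp (-(t*T))*(t*Real.sin (T-c)+Real.cos (T-c))/(1+t^2))) := by
      refine setIntegral_congr_fun measurableSet_Ioi fun t ht => ?_
      rw [inner_ftc c t T (mem_Ioi.mp ht) hT]
      ring
    rw [step, integral_sub intM intE, J_zero κ h0 h1, zero_sub]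
  have hB := abs_le_abs (le_refl (Real.Gamma (1-κ) *
    ∫ q in Ioc (0:ℝ) T, Real.sin (q - c) * q ^ (κ-1))) -- dummy
  -- bound the tail
  have tail : |∫ t in Ioi (0:ℝ), t ^ (-κ) *
        (Real.exp (-(t*T))*(t*Real.sin (T-c)+Real.cos (T-c))/(1+t^2))|
      ≤ 2 * Real.Gamma (1-κ) * T ^ (κ-1) := by
    have hle : ∀ᵐ t ∂(volume.restrict (Ioi (0:ℝ))),
        ‖t ^ (-κ) * (Real.exp (-(t*T))*(t*Real.sin (T-c)+Real.cos (T-c))/(1+t^2))‖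
          ≤ 2 * (t ^ (-κ) * Real.exp (-(T*t))) := by
      filter_upwards [ae_restrict_mem measurableSet_Ioi] with t htm
      have ht0 := mem_Ioi.mp htm
      rw [Real.norm_eq_abs, abs_mul, abs_of_nonneg (Real.rpow_nonneg ht0.le _),
        abs_div, abs_of_pos (show (0:ℝ) < 1 + t^2 by positivity), abs_mul,
        abs_of_pos (Real.exp_pos _)]
      have hb2 : |t*Real.sin (T-c)+Real.cos (T-c)| / (1+t^2) ≤ 2 := by
        rw [div_le_iff₀ (by positivity)]
        have habs : |t*Real.sin (T-c)+Real.cos (T-c)| ≤ t + 1 := by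
          calc |t*Real.sin (T-c)+Real.cos (T-c)|
              ≤ |t*Real.sin (T-c)| + |Real.cos (T-c)| := abs_add_le _ _
            _ ≤ t * 1 + 1 := by
                refine add_le_add ?_ (abs_cos_le_one _)
                rw [abs_mul, abs_of_pos ht0]
                exact mul_le_mul_of_nonneg_left
                  (abs_le.mpr ⟨Real.neg_one_le_sin _, Real.sin_le_one _⟩) ht0.le
            _ = t + 1 := by ring
        nlinarith
      calc t ^ (-κ) * (Real.exp (-(t*T)) * |t*Real.sin (T-c)+Real.cos (T-c)| / (1+t^2))
          = t ^ (-κ) * Real.exp (-(t*T)) * (|t*Real.sin (T-c)+Real.cos (T-c)| / (1+t^2)) := by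
            ring
        _ ≤ t ^ (-κ) * Real.exp (-(t*T)) * 2 := by
            refine mul_le_mul_of_nonneg_left hb2 (by positivity)
        _ = 2 * (t ^ (-κ) * Real.exp (-(T*t))) := by rw [mul_comm t T]; ring
    have := norm_integral_le_of_norm_le ((integrableOn_rpow_exp κ T h0 h1 hT).const_mul 2) hle
    rw [Real.norm_eq_abs] at this
    calc |∫ t in Ioi (0:ℝ), t ^ (-κ) *
          (Real.exp (-(t*T))*(t*Real.sin (T-c)+Real.cos (T-c))/(1+t^2))|
        ≤ ∫ t in Ioi (0:ℝ), 2 * (t ^ (-κ) * Real.exp (-(T*t))) := this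
      _ = 2 * (Real.Gamma (1-κ) * T ^ (κ-1)) := by
          rw [MeasureTheory.integral_const_mul, laplace_rep κ T h0 h1 hT]
      _ = 2 * Real.Gamma (1-κ) * T ^ (κ-1) := by ring
  -- conclude
  have habsF : Real.Gamma (1-κ) * |∫ q in Ioc (0:ℝ) T, Real.sin (q - c) * q ^ (κ-1)|
      ≤ 2 * Real.Gamma (1-κ) * T ^ (κ-1) := by
    have e : Real.Gamma (1-κ) * |∫ q in Ioc (0:ℝ) T, Real.sin (q - c) * q ^ (κ-1)|
        = |Real.Gamma (1-κ) * ∫ q in Ioc (0:ℝ) T, Real.sin (q - c) * q ^ (κ-1)| := by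
      rw [abs_mul, abs_of_pos hG]
    rw [e, key, abs_neg]
    exact tail
  calc |∫ q in Ioc (0:ℝ) T, Real.sin (q - c) * q ^ (κ-1)|
      = Real.Gamma (1-κ) * |∫ q in Ioc (0:ℝ) T, Real.sin (q - c) * q ^ (κ-1)|
        / Real.Gamma (1-κ) := by field_simp
    _ ≤ 2 * Real.Gamma (1-κ) * T ^ (κ-1) / Real.Gamma (1-κ) := by
        gcongr
    _ = 2 * T ^ (κ-1) := by field_simp

end Aux

/-- For `0 < κ < 1` there is a constant `C_κ` such that for all `η > 0` and `ξ ≥ 0`,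
`|∫_0^{η cosh ξ} sin(q - πκ/2) q^{κ-1} dq| ≤ C_κ (η cosh ξ)^{κ-1}`. -/
theorem stmt_6 (κ : ℝ) (h0 : 0 < κ) (h1 : κ < 1) :
    ∃ C : ℝ, 0 < C ∧
      ∀ (η ξ : ℝ), 0 < η → 0 ≤ ξ →
        |∫ q in Set.Ioc (0 : ℝ) (η * Real.cosh ξ),
            Real.sin (q - Real.pi * κ / 2) * q ^ (κ - 1)| ≤
          C * (η * Real.cosh ξ) ^ (κ - 1) := by
  refine ⟨2, by norm_num, fun η ξ hη hξ => ?_⟩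
  have hT : 0 < η * Real.cosh ξ := mul_pos hη (Real.cosh_pos ξ)
  exact main_T κ (η * Real.cosh ξ) h0 h1 hT
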